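/- Let X = {⌊n/{α}⌋ : n ≥ 0} and Y = {⌊n/{β}⌋ : n ≥ 0} where 1 < α < 2 < β are irrationals with 1/α + 1/β = 1. If X = Y, then {α} = {β} and consequently α = (2 - t + √(t²+4))/2 with t = ⌊β⌋ - 1. -/

import Mathlib

lemma sm_floor_div {a : ℝ} (ha : 0 < a) (ha1 : a < 1) :
    StrictMono (fun n : ℕ => ⌊(n : ℝ) / a⌋) := by
  intro n m hnm
  dsimp only
  have h1 : (n : ℝ) / a + 1 ≤ (m : ℝ) / a := by
    rw [div_add' _ _ _ ha.ne', div_le_div_iff₀ ha ha]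
    have : (n : ℝ) + 1 ≤ m := by exact_mod_cast hnm
    nlinarith
  have := Int.floor_le_floor (R := ℝ) h1
  rw [Int.floor_add_one] at this
  omega

lemma eq_of_floor_div_eq {a b : ℝ} (ha : 0 < a) (hb : 0 < b)
    (h : ∀ n : ℕ, ⌊(n : ℝ) / a⌋ = ⌊(n : ℝ) / b⌋) : a = b := by
  by_contra hne
  wlog hlt : a < b generalizing a b
  · exact this hb ha (fun n => (h n).symm) (Ne.symm hne)
      (lt_of_le_of_ne (not_lt.mp hlt) (Ne.symm hne))
  have hc : 0 < 1 / a - 1 / b := by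
    rw [sub_pos]
    exact one_div_lt_one_div_of_lt ha hlt
  obtain ⟨n, hn⟩ := exists_nat_ge (1 / (1 / a - 1 / b))
  have hn1 : (n : ℝ) * (1 / a - 1 / b) ≥ 1 := by
    rw [ge_iff_le, ← div_le_iff₀ hc] at *
    linarith [hn]
  have key : (n : ℝ) / b + 1 ≤ (n : ℝ) / a := by
    have : (n : ℝ) * (1 / a) - (n : ℝ) * (1 / b) ≥ 1 := by nlinarith
    rw [mul_one_div, mul_one_div] at this
    linarith
  have := Int.floor_le_floor (R := ℝ) key
  rw [Int.floor_add_one, h n] at this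
  omega

theorem stmt_19 (α β : ℝ) (hiα : Irrational α) (hiβ : Irrational β)
    (h1 : 1 < α) (h2 : α < 2) (h3 : 2 < β) (hab : 1 / α + 1 / β = 1)
    (hXY : {z : ℤ | ∃ n : ℕ, z = ⌊(n : ℝ) / Int.fract α⌋} =
           {z : ℤ | ∃ n : ℕ, z = ⌊(n : ℝ) / Int.fract β⌋}) :
    Int.fract α = Int.fract β ∧
      α = (2 - ((⌊β⌋ : ℝ) - 1) + Real.sqrt (((⌊β⌋ : ℝ) - 1)^2 + 4)) / 2 := by
  have ha0 : 0 < Int.fract α := Int.fract_pos.mpr (fun h => hiα ⟨⌊α⌋, h.symm⟩)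
  have hb0 : 0 < Int.fract β := Int.fract_pos.mpr (fun h => hiβ ⟨⌊β⌋, h.symm⟩)
  have ha1 : Int.fract α < 1 := Int.fract_lt_one α
  have hb1 : Int.fract β < 1 := Int.fract_lt_one β
  have hr : Set.range (fun n : ℕ => ⌊(n : ℝ) / Int.fract α⌋) =
      Set.range (fun n : ℕ => ⌊(n : ℝ) / Int.fract β⌋) := by
    have e1 : Set.range (fun n : ℕ => ⌊(n : ℝ) / Int.fract α⌋) =
        {z : ℤ | ∃ n : ℕ, z = ⌊(n : ℝ) / Int.fract α⌋} := by
      ext z; simp [Set.range, eq_comm]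
    have e2 : Set.range (fun n : ℕ => ⌊(n : ℝ) / Int.fract β⌋) =
        {z : ℤ | ∃ n : ℕ, z = ⌊(n : ℝ) / Int.fract β⌋} := by
      ext z; simp [Set.range, eq_comm]
    rw [e1, e2, hXY]
  have hfg := (StrictMono.range_inj (sm_floor_div ha0 ha1) (sm_floor_div hb0 hb1)).mp hr
  have hfr : Int.fract α = Int.fract β :=
    eq_of_floor_div_eq ha0 hb0 (fun n => congrFun hfg n)
  refine ⟨hfr, ?_⟩
  -- algebra
  have hfa : ⌊α⌋ = 1 := by
    rw [Int.floor_eq_iff]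
    constructor <;> push_cast <;> linarith
  have hfa' : Int.fract α = α - 1 := by rw [Int.fract, hfa]; push_cast; ring
  set m : ℝ := (⌊β⌋ : ℝ) with hm
  have hfb' : Int.fract β = β - m := rfl
  have hmge : (2 : ℝ) ≤ m := by
    have : (2 : ℤ) ≤ ⌊β⌋ := Int.le_floor.mpr (by push_cast; linarith)
    rw [hm]; exact_mod_cast this
  have hα0 : α ≠ 0 := by linarith
  have hβ0 : β ≠ 0 := by linarith
  have hsum : β + α = α * β := by field_simp at hab; linarith
  have hβeq : β = α - 1 + m := by rw [hfa', hfb'] at hfr; linarith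
  have key : α ^ 2 + (m - 3) * α + (1 - m) = 0 := by
    rw [hβeq] at hsum; nlinarith
  have hpos : 0 ≤ 2 * α + (m - 1) - 2 := by linarith
  have hsq : (m - 1) ^ 2 + 4 = (2 * α + (m - 1) - 2) ^ 2 := by nlinarith
  rw [hsq, Real.sqrt_sq hpos]
  ring
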